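/- arXiv:2402.12569 — 2 statements merged into one kernel-verified Lean document; each statement's English description precedes it below -/
import Mathlib

section
/- Let A₁, A₂, B₁, B₂ be finite types. Let μ : Matrix ((A₂ × B₂) × (A₁ × B₁)) ((A₂ × B₂) × (A₁ × B₁)) ℂ be positive semidefinite and have positive partial transpose with respect to the B factors, i.e., the matrix μ^{T_B} defined by μ^{T_B} ((a₂,b₂),(a₁,b₁)) ((a₂',b₂'),(a₁',b₁')) = μ ((a₂,b₂'),(a₁,b₁')) ((a₂',b₂),(a₁',b₁)) is positive semidefinite. Let ρ : Matrix (A₁ × B₁) (A₁ × B₁) ℂ be positive semidefinite with positive partial transpose on A₁, i.e., the matrix ρ^{T_{A₁}} defined by ρ^{T_{A₁}} (a,b) (a',b') = ρ (a',b) (a,b') is positive semidefinite. Then the partial transpose on B₂ of the link product, namely the matrix (a₂,b₂) (a₂',b₂') ↦ (μ ⋆ ρ) (a₂,b₂') (a₂',b₂), is positive semidefinite. (States with positive partial transpose are closed under the link product; this makes the resource theory of NPT entanglement Choi-defined.) -/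
open Matrix Kronecker BigOperators
open scoped ComplexOrder

/-- Link product of a bipartite matrix with a state. -/
noncomputable def linkState {S T : Type*} [Fintype T] (N : Matrix (S × T) (S × T) ℂ)
    (ρ : Matrix T T ℂ) : Matrix S S ℂ :=
  Matrix.of fun s s' => ∑ t, ∑ t', N (s, t) (s', t') * ρ t t'

lemma linkState_posSemidef {S T : Type*} [Fintype S] [Fintype T]
    {N : Matrix (S × T) (S × T) ℂ} {ρ : Matrix T T ℂ}
    (hN : N.PosSemidef) (hρ : ρ.PosSemidef) : (linkState N ρ).PosSemidef := by
  obtain ⟨C, hC⟩ : ∃ C : Matrix T T ℂ, ρ = star C * C := by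
    classical
    open MatrixOrder in exact CStarAlgebra.nonneg_iff_eq_star_mul_self.mp hρ.nonneg
  refine posSemidef_iff_dotProduct_mulVec.mpr ⟨?_, ?_⟩
  · ext s s'
    show star (linkState N ρ s' s) = linkState N ρ s s'
    simp only [linkState, of_apply, star_sum, star_mul']
    rw [Finset.sum_comm]
    refine Finset.sum_congr rfl fun t _ => Finset.sum_congr rfl fun t' _ => ?_
    rw [hN.1.apply, hρ.1.apply, mul_comm]
  · intro x
    have key : dotProduct (star x) (linkState N ρ *ᵥ x)
        = ∑ k, dotProduct (star (fun st : S × T => x st.1 * C k st.2))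
            (N *ᵥ (fun st : S × T => x st.1 * C k st.2)) := by
      simp only [dotProduct, mulVec, linkState, of_apply, hC, star_eq_conjTranspose, Matrix.mul_apply,
        conjTranspose_apply, Pi.star_apply, star_mul', Finset.mul_sum, Finset.sum_mul,
        Fintype.sum_prod_type]
      conv_lhs => enter [2, s, 2, s', 2, t]; rw [Finset.sum_comm]
      conv_lhs => enter [2, s, 2, s']; rw [Finset.sum_comm]
      conv_lhs => enter [2, s]; rw [Finset.sum_comm]
      rw [Finset.sum_comm]
      conv_lhs => enter [2, k, 2, s]; rw [Finset.sum_comm]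
      refine Finset.sum_congr rfl fun k _ => Finset.sum_congr rfl fun s _ =>
        Finset.sum_congr rfl fun t _ => Finset.sum_congr rfl fun s' _ =>
        Finset.sum_congr rfl fun t' _ => by ring
    rw [key]
    exact Finset.sum_nonneg fun k _ => hN.dotProduct_mulVec_nonneg _

theorem stmt12 {A₁ A₂ B₁ B₂ : Type*} [Fintype A₁] [Fintype A₂] [Fintype B₁] [Fintype B₂]
    (μ : Matrix ((A₂ × B₂) × (A₁ × B₁)) ((A₂ × B₂) × (A₁ × B₁)) ℂ)
    (hμ : μ.PosSemidef)
    (hμTB : (Matrix.of fun p q : (A₂ × B₂) × (A₁ × B₁) =>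
        μ ((p.1.1, q.1.2), (p.2.1, q.2.2)) ((q.1.1, p.1.2), (q.2.1, p.2.2))).PosSemidef)
    (ρ : Matrix (A₁ × B₁) (A₁ × B₁) ℂ) (hρ : ρ.PosSemidef)
    (hρTA : (Matrix.of fun p q : A₁ × B₁ =>
        ρ (q.1, p.2) (p.1, q.2)).PosSemidef) :
    (Matrix.of fun p q : A₂ × B₂ =>
        linkState μ ρ (p.1, q.2) (q.1, p.2)).PosSemidef := by
  have hσ : ((Matrix.of fun p q : A₁ × B₁ => ρ (q.1, p.2) (p.1, q.2))ᵀ).PosSemidef :=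
    hρTA.transpose
  have heq : (Matrix.of fun p q : A₂ × B₂ =>
      linkState μ ρ (p.1, q.2) (q.1, p.2))
      = linkState (Matrix.of fun p q : (A₂ × B₂) × (A₁ × B₁) =>
          μ ((p.1.1, q.1.2), (p.2.1, q.2.2)) ((q.1.1, p.1.2), (q.2.1, p.2.2)))
          ((Matrix.of fun p q : A₁ × B₁ => ρ (q.1, p.2) (p.1, q.2))ᵀ) := by
    ext p q
    simp only [linkState, of_apply, transpose_apply, Fintype.sum_prod_type]
    refine Finset.sum_congr rfl fun a _ => ?_
    rw [Finset.sum_comm]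
    conv_lhs => enter [2, c]; rw [Finset.sum_comm]
    rw [Finset.sum_comm]
  rw [heq]
  exact linkState_posSemidef hμTB hσ
end

section
/- Let A, B be nonempty finite types with d_A = Fintype.card A. Call a vector v : ι → ℂ 'free' if every entry has nonnegative real part and zero imaginary part, and ∑ i, ‖v i‖^2 = 1. Let μ : Matrix (B × A) (B × A) ℂ admit a decomposition μ = ∑ α, (p α : ℂ) • Matrix.vecMulVec (v α) (star (v α)) over a finite index type, with p α ≥ 0, ∑ α, p α = 1, and each v α : B × A → ℂ free; assume moreover the marginal condition tr₁ μ = (d_A : ℂ)⁻¹ • (1 : Matrix A A ℂ). Let ρ : Matrix A A ℂ admit a decomposition ρ = ∑ β, (q β : ℂ) • Matrix.vecMulVec (w β) (star (w β)) over a finite index type, with q β ≥ 0, ∑ β, q β = 1, and each w β : A → ℂ free. Then there exist a finite index type κ, reals s : κ → ℝ with s k ≥ 0 and ∑ k, s k = 1, and free vectors u : κ → (B → ℂ) such that (d_A : ℂ) • (μ ⋆ ρ) = ∑ k, (s k : ℂ) • Matrix.vecMulVec (u k) (star (u k)). (States with non-negative amplitudes are closed under the renormalized link product; this makes the resource theory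 of non-negativity of quantum amplitudes Choi-defined.) -/
open Matrix Kronecker BigOperators

/-- A vector is free (for the resource theory of non-negativity of amplitudes) if all
its entries are nonnegative reals and it is normalized. -/
def FreeVec {ι : Type*} [Fintype ι] (v : ι → ℂ) : Prop :=
  (∀ i, 0 ≤ (v i).re ∧ (v i).im = 0) ∧ ∑ i, ‖v i‖ ^ 2 = 1

/-- Partial trace over the first tensor factor. -/
noncomputable def tr₁ {X Y : Type*} [Fintype X] (M : Matrix (X × Y) (X × Y) ℂ) :
    Matrix Y Y ℂ :=
  Matrix.of fun y y' => ∑ x, M (x, y) (x, y')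

lemma sum3_comm' {M : Type*} [AddCommMonoid M] {a b c : Type*}
    [Fintype a] [Fintype b] [Fintype c] (f : a → b → c → M) :
    ∑ x, ∑ y, ∑ z, f x y z = ∑ y, ∑ z, ∑ x, f x y z := by
  have h1 : (∑ x, ∑ y, ∑ z, f x y z) = ∑ x, ∑ yz : b × c, f x yz.1 yz.2 := by
    simp [Fintype.sum_prod_type]
  have h2 : (∑ y, ∑ z, ∑ x, f x y z) = ∑ yz : b × c, ∑ x, f x yz.1 yz.2 := by
    simp [Fintype.sum_prod_type]
  rw [h1, h2, Finset.sum_comm]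

lemma sum4_comm' {M : Type*} [AddCommMonoid M] {a b c d : Type*}
    [Fintype a] [Fintype b] [Fintype c] [Fintype d] (f : a → b → c → d → M) :
    ∑ x, ∑ y, ∑ z, ∑ t, f x y z t = ∑ z, ∑ t, ∑ x, ∑ y, f x y z t := by
  have h1 : (∑ x, ∑ y, ∑ z, ∑ t, f x y z t)
      = ∑ xy : a × b, ∑ zt : c × d, f xy.1 xy.2 zt.1 zt.2 := by
    simp [Fintype.sum_prod_type]
  have h2 : (∑ z, ∑ t, ∑ x, ∑ y, f x y z t)
      = ∑ zt : c × d, ∑ xy : a × b, f xy.1 xy.2 zt.1 zt.2 := by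
    simp [Fintype.sum_prod_type]
  rw [h1, h2, Finset.sum_comm]

lemma mul_star_self (z : ℂ) : z * star z = ((‖z‖ ^ 2 : ℝ) : ℂ) := by
  have := Complex.mul_conj z
  simpa [Complex.normSq_eq_norm_sq] using this

theorem stmt14 {A B : Type*} [Fintype A] [Fintype B] [Nonempty A] [Nonempty B]
    [DecidableEq A] [DecidableEq B]
    (μ : Matrix (B × A) (B × A) ℂ)
    (ι : Type) [Fintype ι] (p : ι → ℝ) (hp : ∀ α, 0 ≤ p α) (hp1 : ∑ α, p α = 1)
    (v : ι → (B × A → ℂ)) (hv : ∀ α, FreeVec (v α))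
    (hμ : μ = ∑ α, (p α : ℂ) • Matrix.vecMulVec (v α) (star (v α)))
    (hmarg : tr₁ μ = (Fintype.card A : ℂ)⁻¹ • (1 : Matrix A A ℂ))
    (ρ : Matrix A A ℂ)
    (κ : Type) [Fintype κ] (q : κ → ℝ) (hq : ∀ β, 0 ≤ q β) (hq1 : ∑ β, q β = 1)
    (w : κ → (A → ℂ)) (hw : ∀ β, FreeVec (w β))
    (hρ : ρ = ∑ β, (q β : ℂ) • Matrix.vecMulVec (w β) (star (w β))) :
    ∃ (n : ℕ) (s : Fin n → ℝ) (u : Fin n → (B → ℂ)),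
      (∀ k, 0 ≤ s k) ∧ (∑ k, s k = 1) ∧ (∀ k, FreeVec (u k)) ∧
        (Fintype.card A : ℂ) • linkState μ ρ =
          ∑ k, (s k : ℂ) • Matrix.vecMulVec (u k) (star (u k)) := by
  classical
  set F : ι × κ → B → ℂ := fun m b => ∑ a, v m.1 (b, a) * w m.2 a with hFdef
  set N : ι × κ → ℝ := fun m => ∑ b, ‖F m b‖ ^ 2 with hNdef
  have hNnn : ∀ m, 0 ≤ N m := fun m => Finset.sum_nonneg fun b _ => by positivity
  -- entries of F are nonneg reals
  have hFre : ∀ m b, 0 ≤ (F m b).re ∧ (F m b).im = 0 := by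
    intro m b
    have h1 : ∀ a, 0 ≤ (v m.1 (b, a) * w m.2 a).re ∧ (v m.1 (b, a) * w m.2 a).im = 0 := by
      intro a
      obtain ⟨h1, h2⟩ := (hv m.1).1 (b, a)
      obtain ⟨h3, h4⟩ := (hw m.2).1 a
      constructor
      · rw [Complex.mul_re, h2, h4]; simpa using mul_nonneg h1 h3
      · rw [Complex.mul_im, h2, h4]; ring
    constructor
    · rw [Complex.re_sum]
      exact Finset.sum_nonneg fun a _ => (h1 a).1
    · rw [Complex.im_sum]
      exact Finset.sum_eq_zero fun a _ => (h1 a).2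
  -- decomposition of the link product
  have hlink : linkState μ ρ
      = ∑ m : ι × κ, ((p m.1 * q m.2 : ℝ) : ℂ) • Matrix.vecMulVec (F m) (star (F m)) := by
    rw [hμ, hρ]
    ext b b'
    simp only [linkState, Matrix.sum_apply, Matrix.smul_apply, Matrix.vecMulVec_apply,
      Matrix.of_apply, Pi.star_apply, smul_eq_mul, Fintype.sum_prod_type, star_sum, star_mul',
      Finset.sum_mul_sum, Finset.mul_sum, Finset.sum_mul, hFdef]
    rw [sum4_comm' fun (a a' : A) (β : κ) (α : ι) =>
        ((p α:ℂ) * (v α (b,a) * star (v α (b',a'))) * ((q β:ℂ) * (w β a * star (w β a'))))]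
    rw [Finset.sum_comm]
    refine Finset.sum_congr rfl fun α _ => Finset.sum_congr rfl fun β _ => ?_
    rw [Finset.sum_comm]
    refine Finset.sum_congr rfl fun x _ => Finset.sum_congr rfl fun y _ => ?_
    push_cast
    ring
  -- trace of ρ
  have htrρ : ∑ a, ρ a a = 1 := by
    rw [hρ]
    simp only [Matrix.sum_apply, Matrix.smul_apply, Matrix.vecMulVec_apply, Pi.star_apply,
      smul_eq_mul]
    rw [Finset.sum_comm]
    have : ∀ β, ∑ a, (q β : ℂ) * (w β a * star (w β a)) = ((q β : ℝ) : ℂ) := by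
      intro β
      rw [← Finset.mul_sum]
      have : ∑ a, w β a * star (w β a) = ((∑ a, ‖w β a‖ ^ 2 : ℝ) : ℂ) := by
        rw [Complex.ofReal_sum]
        exact Finset.sum_congr rfl fun a _ => mul_star_self _
      rw [this, (hw β).2]
      simp
    rw [Finset.sum_congr rfl fun β _ => this β]
    push_cast
    rw [← Complex.ofReal_sum]
    norm_cast
  -- trace of the link state
  have htr : ∑ b, linkState μ ρ b b = (Fintype.card A : ℂ)⁻¹ := by
    have : ∑ b, linkState μ ρ b b = ∑ a, ∑ a', tr₁ μ a a' * ρ a a' := by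
      simp only [linkState, Matrix.of_apply, tr₁]
      rw [sum3_comm' fun (b : B) (a a' : A) => μ (b, a) (b, a') * ρ a a']
      exact Finset.sum_congr rfl fun a _ => Finset.sum_congr rfl fun a' _ =>
        (Finset.sum_mul ..).symm
    rw [this, hmarg]
    simp only [Matrix.smul_apply, Matrix.one_apply, smul_eq_mul, ite_mul, one_mul, zero_mul,
      mul_ite, mul_zero]
    simp only [Finset.sum_ite_eq, Finset.sum_ite_eq', Finset.mem_univ, if_true]
    rw [← Finset.mul_sum, htrρ]
    simp
  -- sum rule for the weights
  have hsum : ∑ m : ι × κ, p m.1 * q m.2 * N m = (Fintype.card A : ℝ)⁻¹ := by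
    have h1 : ∑ b, linkState μ ρ b b
        = ∑ m : ι × κ, ((p m.1 * q m.2 * N m : ℝ) : ℂ) := by
      rw [hlink]
      simp only [Matrix.sum_apply, Matrix.smul_apply, Matrix.vecMulVec_apply, Pi.star_apply,
        smul_eq_mul]
      rw [Finset.sum_comm]
      refine Finset.sum_congr rfl fun m _ => ?_
      rw [← Finset.mul_sum]
      have : ∑ b, F m b * star (F m b) = ((N m : ℝ) : ℂ) := by
        rw [hNdef, Complex.ofReal_sum]
        exact Finset.sum_congr rfl fun b _ => mul_star_self _
      rw [this]
      push_cast
      ring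
    rw [htr] at h1
    have := h1.symm
    rw [← Complex.ofReal_sum] at this
    have h2 : ((∑ m : ι × κ, p m.1 * q m.2 * N m : ℝ) : ℂ)
        = (((Fintype.card A : ℝ)⁻¹ : ℝ) : ℂ) := by
      rw [this]; push_cast; ring
    exact_mod_cast h2
  have hcardA : (0 : ℝ) < Fintype.card A := by positivity
  have hcardB : (0 : ℝ) < Fintype.card B := by positivity
  -- the construction
  refine ⟨Fintype.card (ι × κ),
    fun k => (Fintype.card A : ℝ) * (p ((Fintype.equivFin (ι × κ)).symm k).1 *
      q ((Fintype.equivFin (ι × κ)).symm k).2 * N ((Fintype.equivFin (ι × κ)).symm k)),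
    fun k => if N ((Fintype.equivFin (ι × κ)).symm k) = 0 then
        (fun _ => (((Real.sqrt (Fintype.card B))⁻¹ : ℝ) : ℂ))
      else fun b => (((Real.sqrt (N ((Fintype.equivFin (ι × κ)).symm k)))⁻¹ : ℝ) : ℂ) *
        F ((Fintype.equivFin (ι × κ)).symm k) b, ?_, ?_, ?_, ?_⟩
  · intro k
    have := hNnn ((Fintype.equivFin (ι × κ)).symm k)
    have := hp ((Fintype.equivFin (ι × κ)).symm k).1
    have := hq ((Fintype.equivFin (ι × κ)).symm k).2
    positivity
  · rw [Equiv.sum_comp (Fintype.equivFin (ι × κ)).symm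
      (fun m => (Fintype.card A : ℝ) * (p m.1 * q m.2 * N m))]
    rw [← Finset.mul_sum, hsum]
    field_simp
  · intro k
    beta_reduce
    set m := (Fintype.equivFin (ι × κ)).symm k with hm
    split_ifs with h
    · constructor
      · intro b
        constructor
        · simp only [Complex.ofReal_re]
          positivity
        · simp
      · have : ‖(((Real.sqrt (Fintype.card B))⁻¹ : ℝ) : ℂ)‖ = (Real.sqrt (Fintype.card B))⁻¹ := by
          rw [Complex.norm_real, Real.norm_eq_abs, abs_of_nonneg (by positivity)]
        simp only [this, Finset.sum_const, Finset.card_univ, nsmul_eq_mul]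
        rw [inv_pow, Real.sq_sqrt hcardB.le]
        field_simp
    · have hNpos : 0 < N m := lt_of_le_of_ne (hNnn m) (Ne.symm h)
      constructor
      · intro b
        obtain ⟨h1, h2⟩ := hFre m b
        constructor
        · rw [Complex.mul_re, Complex.ofReal_re, Complex.ofReal_im, h2]
          simp only [zero_mul, sub_zero]
          positivity
        · rw [Complex.mul_im, Complex.ofReal_re, Complex.ofReal_im, h2]
          ring
      · have hn : ∀ b, ‖(((Real.sqrt (N m))⁻¹ : ℝ) : ℂ) * F m b‖ ^ 2
            = (N m)⁻¹ * ‖F m b‖ ^ 2 := by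
          intro b
          rw [norm_mul, Complex.norm_real, Real.norm_eq_abs, abs_of_nonneg (by positivity), mul_pow,
            inv_pow, Real.sq_sqrt (hNnn m)]
        simp only [hn, ← Finset.mul_sum]
        have hNm : ∑ i : B, ‖F m i‖ ^ 2 = N m := rfl
        rw [hNm]
        field_simp
  · rw [Equiv.sum_comp (Fintype.equivFin (ι × κ)).symm
      (fun m => (((Fintype.card A : ℝ) * (p m.1 * q m.2 * N m) : ℝ) : ℂ) •
        Matrix.vecMulVec (if N m = 0 then (fun _ => (((Real.sqrt (Fintype.card B))⁻¹ : ℝ) : ℂ))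
          else fun b => (((Real.sqrt (N m))⁻¹ : ℝ) : ℂ) * F m b)
        (star (if N m = 0 then (fun _ => (((Real.sqrt (Fintype.card B))⁻¹ : ℝ) : ℂ))
          else fun b => (((Real.sqrt (N m))⁻¹ : ℝ) : ℂ) * F m b)))]
    rw [hlink, Finset.smul_sum]
    refine Finset.sum_congr rfl fun m _ => ?_
    split_ifs with h
    · have hF0 : F m = 0 := by
        funext b
        have : ‖F m b‖ ^ 2 = 0 := by
          have := (Finset.sum_eq_zero_iff_of_nonneg (fun b _ => by positivity)).mp h b
            (Finset.mem_univ b)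
          exact this
        simpa using this
      rw [hF0, h]
      ext b b'
      simp [Matrix.vecMulVec_apply]
    · have hNpos : 0 < N m := lt_of_le_of_ne (hNnn m) (Ne.symm h)
      have hr : (Fintype.card A : ℝ) * (p m.1 * q m.2 * N m) *
          ((Real.sqrt (N m))⁻¹ * (Real.sqrt (N m))⁻¹)
          = (Fintype.card A : ℝ) * (p m.1 * q m.2) := by
        rw [← mul_inv, Real.mul_self_sqrt (hNnn m)]
        field_simp
      have hrC : ((Fintype.card A : ℝ) : ℂ) * ((p m.1 * q m.2 * N m : ℝ) : ℂ) *
          ((((Real.sqrt (N m))⁻¹ : ℝ) : ℂ) * (((Real.sqrt (N m))⁻¹ : ℝ) : ℂ))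
          = ((Fintype.card A : ℝ) : ℂ) * ((p m.1 * q m.2 : ℝ) : ℂ) := by
        exact_mod_cast congrArg (Complex.ofReal) hr
      ext b b'
      simp only [Matrix.smul_apply, Matrix.vecMulVec_apply, Pi.star_apply, smul_eq_mul,
        star_mul', Complex.star_def, Complex.conj_ofReal]
      push_cast at hrC ⊢
      linear_combination -(F m b * (starRingEnd ℂ) (F m b')) * hrC
end
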